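/- For a bipartite graph, the degree sequence of one side of the bipartition is the conjugate of the degree sequence of the other side if and only if the neighborhoods of the vertices in one side are linearly ordered by inclusion (i.e., the graph is a Ferrers graph). -/

import Mathlib

noncomputable section
open scoped Classical

def spanningTreeCount {V : Type*} (G : SimpleGraph V) : ℕ :=
  {H : G.Subgraph | H.IsSpanning ∧ H.coe.IsTree}.ncard

def sdeg {V : Type*} (G : SimpleGraph V) (v : V) : ℕ := (G.neighborSet v).ncard

def IsBipartitionOn {V : Type*} (G : SimpleGraph V) (X Y : Set V) : Prop :=
  Disjoint X Y ∧ X ∪ Y = Set.univ ∧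
    ∀ u v, G.Adj u v → (u ∈ X ∧ v ∈ Y) ∨ (u ∈ Y ∧ v ∈ X)

def FerrersGood {V : Type*} [Fintype V] (G : SimpleGraph V) (X Y : Set V) : Prop :=
  (spanningTreeCount G : ℚ) ≤
    (∏ v : V, (sdeg G v : ℚ)) / ((X.ncard : ℚ) * (Y.ncard : ℚ))
def conjugateMultiset (m : Multiset ℕ) : Multiset ℕ :=
  (Multiset.range (m.sup)).map (fun i => (m.filter (fun p => i + 1 ≤ p)).card)

lemma countP_split (s : Multiset ℕ) (n : ℕ) :
    s.countP (fun p => n ≤ p) = s.countP (fun p => n = p) + s.countP (fun p => n + 1 ≤ p) := by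
  induction s using Multiset.induction with
  | empty => simp
  | cons a s ih =>
    simp only [Multiset.countP_cons, ih]
    by_cases h : n ≤ a <;> by_cases h2 : n = a <;> by_cases h3 : n + 1 ≤ a <;>
      simp [h, h2, h3] <;> omega

lemma count_eq_countP' (s : Multiset ℕ) (n : ℕ) : s.count n = s.countP (fun p => n = p) := by
  induction s using Multiset.induction with
  | empty => simp
  | cons a s ih =>
    rcases eq_or_ne n a with rfl | h
    · simp [Multiset.count_cons, Multiset.countP_cons, ih]
    · simp [Multiset.count_cons, Multiset.countP_cons, h, ih]

lemma multiset_ext_of_countP (s t : Multiset ℕ)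
    (h : ∀ k, s.countP (fun p => k ≤ p) = t.countP (fun p => k ≤ p)) : s = t := by
  ext n
  rw [count_eq_countP', count_eq_countP']
  have h1 := countP_split s n
  have h2 := countP_split t n
  have := h n; have := h (n+1)
  omega

lemma chain_countP {α : Type*} (p : α → Bool) :
    ∀ (l : List α), List.Pairwise (fun a b => p b = true → p a = true) l →
    ∀ k (hk : k < l.length), (k + 1 ≤ l.countP p ↔ p (l.get ⟨k, hk⟩) = true) := by
  intro l
  induction l with
  | nil => intro _ k hk; simp at hk
  | cons a l ih =>
    intro hp k hk
    rcases List.pairwise_cons.1 hp with ⟨hhead, htail⟩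
    cases k with
    | zero =>
      simp only [List.countP_cons, List.get]
      constructor
      · intro h
        by_cases ha : p a = true
        · exact ha
        · simp only [ha, cond_false] at h
          simp only [Bool.false_eq_true, if_false, Nat.add_zero] at h
          obtain ⟨b, hb, hpb⟩ := List.countP_pos_iff.1 (show 0 < l.countP p by omega)
          exact hhead b hb hpb
      · intro h; simp [h]
    | succ k =>
      have hk' : k < l.length := by simpa using hk
      have := ih htail k hk'
      simp only [List.countP_cons, List.get]
      constructor
      · intro h
        exact (this).1 (by split at h <;> omega)
      · intro h
        have h1 := (this).2 h
        have h2 : p a = true := hhead _ (List.get_mem l ⟨k, hk'⟩) h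
        simp [h2]; omega

lemma exists_mem_of_le_sup (s : Multiset ℕ) (j : ℕ) (hj : 1 ≤ j) (h : j ≤ s.sup) :
    ∃ a ∈ s, j ≤ a := by
  induction s using Multiset.induction with
  | empty => simp at h; omega
  | cons a s ih =>
    rw [Multiset.sup_cons] at h
    rcases le_sup_iff.1 h with h1 | h1
    · exact ⟨a, Multiset.mem_cons_self a s, h1⟩
    · obtain ⟨b, hb, hjb⟩ := ih h1
      exact ⟨b, Multiset.mem_cons_of_mem hb, hjb⟩

lemma range_countP_min (s c : ℕ) :
    (Multiset.range s).countP (fun i => i + 1 ≤ c) = min c s := by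
  have h1 : (Finset.range s).filter (fun i => i + 1 ≤ c) = Finset.range (min c s) := by
    ext i; simp only [Finset.mem_filter, Finset.mem_range]; omega
  rw [Multiset.countP_eq_card_filter, ← Finset.range_val, ← Finset.filter_val, ← Finset.card_def,
    h1, Finset.card_range]

section Main
variable {X Y : Type*} [Fintype X] [Fintype Y]

lemma ferrers_back (N : X → Finset Y) (M : Y → Finset X)
    (hMN : ∀ x y, x ∈ M y ↔ y ∈ N x)
    (hnest : ∀ x x', N x ⊆ N x' ∨ N x' ⊆ N x) :
    ((Finset.univ.val.map (fun y : Y => (M y).card)).filter (fun d => 0 < d)) =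
      conjugateMultiset (Finset.univ.val.map (fun x : X => (N x).card)) := by
  classical
  set A := Finset.univ.val.map (fun x : X => (N x).card) with hA
  set B := Finset.univ.val.map (fun y : Y => (M y).card) with hB
  set l : List X := ((Finset.univ.val : Multiset X).toList).mergeSort
      (fun a b => decide ((N b).card ≤ (N a).card)) with hldef
  have hl : (l : Multiset X) = Finset.univ.val := by
    rw [Multiset.coe_eq_coe.2 (List.mergeSort_perm _ _), Multiset.coe_toList]
  have hsorted : l.Pairwise (fun a b => N b ⊆ N a) := by
    have h := List.pairwise_mergeSort (le := fun a b : X => decide ((N b).card ≤ (N a).card))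
      (fun a b c => by simp only [decide_eq_true_eq]; omega)
      (fun a b => by simp only [Bool.or_eq_true, decide_eq_true_eq]; omega)
      ((Finset.univ.val : Multiset X).toList)
    refine h.imp ?_
    intro a b hab
    simp only [decide_eq_true_eq] at hab
    rcases hnest a b with h1 | h1
    · have h2 := Finset.eq_of_subset_of_card_le h1 hab
      rw [← h2]
    · exact h1
  have hMcard : ∀ y, (M y).card = List.countP (fun x => decide (y ∈ N x)) l := by
    intro y
    have h1 : M y = Finset.univ.filter (fun x => y ∈ N x) := by
      ext x; simp [hMN]
    rw [h1, Finset.card_def, Finset.filter_val, ← Multiset.countP_eq_card_filter, ← hl,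
      Multiset.coe_countP]
  have hAcount : ∀ j, A.countP (fun p => j ≤ p)
      = List.countP (fun x => decide (j ≤ (N x).card)) l := by
    intro j
    rw [hA, Multiset.countP_map, ← Multiset.countP_eq_card_filter, ← hl, Multiset.coe_countP]
  have hBcount : ∀ k : ℕ, B.countP (fun p => k ≤ p)
      = Finset.univ.val.countP (fun y => k ≤ (M y).card) := by
    intro k
    rw [hB, Multiset.countP_map, ← Multiset.countP_eq_card_filter]
  have hcardA : Multiset.card A = l.length := by
    rw [hA, Multiset.card_map, ← hl, Multiset.coe_card]
  have KEY : ∀ k, B.countP (fun p => k + 1 ≤ p) =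
      (Multiset.range A.sup).countP (fun i => k + 1 ≤ A.countP (fun p => i + 1 ≤ p)) := by
    intro k
    by_cases hk : k < l.length
    · set x0 := l.get ⟨k, hk⟩ with hx0
      have hcsup : (N x0).card ≤ A.sup := Multiset.le_sup (by
        rw [hA]; exact Multiset.mem_map.2 ⟨x0, Finset.mem_val.mpr (Finset.mem_univ _), rfl⟩)
      have hchain1 : ∀ y : Y,
          (k + 1 ≤ List.countP (fun x => decide (y ∈ N x)) l ↔ y ∈ N x0) := by
        intro y
        have hp : l.Pairwise
            (fun a b => decide (y ∈ N b) = true → decide (y ∈ N a) = true) :=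
          hsorted.imp (fun hab h => by
            simp only [decide_eq_true_eq] at h ⊢; exact hab h)
        simpa [hx0] using chain_countP _ l hp k hk
      have hL : B.countP (fun p => k + 1 ≤ p) = (N x0).card := by
        rw [hBcount]
        have hstep : Finset.univ.val.countP (fun y => k + 1 ≤ (M y).card)
            = Finset.univ.val.countP (fun y => y ∈ N x0) :=
          Multiset.countP_congr rfl (fun y _ => by rw [hMcard y]; exact propext (hchain1 y))
        rw [hstep, Multiset.countP_eq_card_filter, ← Finset.filter_val, ← Finset.card_def]
        congr 1
        ext y; simp
      have hchain2 : ∀ i : ℕ,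
          (k + 1 ≤ A.countP (fun p => i + 1 ≤ p) ↔ i + 1 ≤ (N x0).card) := by
        intro i
        rw [hAcount]
        have hp : l.Pairwise (fun a b => decide (i + 1 ≤ (N b).card) = true →
            decide (i + 1 ≤ (N a).card) = true) :=
          hsorted.imp (fun hab h => by
            simp only [decide_eq_true_eq] at h ⊢
            exact le_trans h (Finset.card_le_card hab))
        simpa [hx0] using chain_countP _ l hp k hk
      have hR : (Multiset.range A.sup).countP
            (fun i => k + 1 ≤ A.countP (fun p => i + 1 ≤ p)) = (N x0).card := by
        have hstep : (Multiset.range A.sup).countP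
              (fun i => k + 1 ≤ A.countP (fun p => i + 1 ≤ p))
            = (Multiset.range A.sup).countP (fun i => i + 1 ≤ (N x0).card) :=
          Multiset.countP_congr rfl (fun i _ => propext (hchain2 i))
        rw [hstep, range_countP_min]
        omega
      rw [hL, hR]
    · push_neg at hk
      have hL : B.countP (fun p => k + 1 ≤ p) = 0 := by
        rw [hBcount]
        refine Multiset.countP_eq_zero.2 (fun y _ => ?_)
        have h2 : (M y).card ≤ l.length := (hMcard y) ▸ List.countP_le_length
        omega
      have hR : (Multiset.range A.sup).countP
            (fun i => k + 1 ≤ A.countP (fun p => i + 1 ≤ p)) = 0 := by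
        refine Multiset.countP_eq_zero.2 (fun i _ => ?_)
        have := Multiset.countP_le_card (fun p => i + 1 ≤ p) A
        rw [hcardA] at this; omega
      rw [hL, hR]
  apply multiset_ext_of_countP
  intro k
  cases k with
  | zero =>
    rw [Multiset.countP_eq_card.2 (fun a _ => Nat.zero_le _),
        Multiset.countP_eq_card.2 (fun a _ => Nat.zero_le _)]
    rw [conjugateMultiset, Multiset.card_map, Multiset.card_range]
    rw [← Multiset.countP_eq_card_filter]
    have e3 : B.countP (fun d => 0 < d) = B.countP (fun p => 0 + 1 ≤ p) :=
      Multiset.countP_congr rfl (fun d _ => propext (by omega))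
    rw [e3, KEY 0]
    have e4 : (Multiset.range A.sup).countP
          (fun i => 0 + 1 ≤ A.countP (fun p => i + 1 ≤ p))
        = Multiset.card (Multiset.range A.sup) := by
      refine Multiset.countP_eq_card.2 (fun i hi => ?_)
      rw [Multiset.mem_range] at hi
      obtain ⟨a, ha, hja⟩ := exists_mem_of_le_sup A (i + 1) (by omega) (by omega)
      have hpos : 0 < A.countP (fun p => i + 1 ≤ p) := Multiset.countP_pos.2 ⟨a, ha, hja⟩
      omega
    rw [e4, Multiset.card_range]
  | succ k =>
    rw [conjugateMultiset, Multiset.countP_map, ← Multiset.countP_eq_card_filter]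
    rw [Multiset.countP_filter]
    have e5 : B.countP (fun a => k + 1 ≤ a ∧ 0 < a) = B.countP (fun p => k + 1 ≤ p) :=
      Multiset.countP_congr rfl (fun d _ => propext (by omega))
    rw [e5, KEY k]
    exact Multiset.countP_congr rfl (fun i _ => by
      rw [Multiset.countP_eq_card_filter])

lemma ferrers_fwd (N : X → Finset Y) (M : Y → Finset X)
    (hMN : ∀ x y, x ∈ M y ↔ y ∈ N x)
    (heq : ((Finset.univ.val.map (fun y : Y => (M y).card)).filter (fun d => 0 < d)) =
      conjugateMultiset (Finset.univ.val.map (fun x : X => (N x).card)))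
    (x x' : X) : N x ⊆ N x' ∨ N x' ⊆ N x := by
  classical
  rcases eq_or_ne x x' with rfl | hne
  · exact Or.inl (Finset.Subset.refl _)
  set A := Finset.univ.val.map (fun x : X => (N x).card) with hA
  set B := Finset.univ.val.map (fun y : Y => (M y).card) with hB
  set f : ℕ → ℕ := fun p => p * p - p with hf
  have hsum : ((B.filter (fun d => 0 < d)).map f).sum = ((conjugateMultiset A).map f).sum := by
    rw [heq]
  have hL : ((B.filter (fun d => 0 < d)).map f).sum = (B.map f).sum := by
    conv_rhs => rw [← Multiset.filter_add_not (fun d => 0 < d) B]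
    rw [Multiset.map_add, Multiset.sum_add]
    have hz : ((B.filter (fun d => ¬ 0 < d)).map f).sum = 0 := by
      apply Multiset.sum_eq_zero
      intro z hz
      obtain ⟨d, hd, rfl⟩ := Multiset.mem_map.1 hz
      have hd2 := (Multiset.mem_filter.1 hd).2
      simp only [Nat.not_lt, Nat.le_zero] at hd2
      subst hd2
      simp [hf]
    omega
  have hBsum : (B.map f).sum = ∑ y : Y, f ((M y).card) := by
    rw [hB, Multiset.map_map]; rfl
  have hCsum : ((conjugateMultiset A).map f).sum
      = ∑ i ∈ Finset.range A.sup,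
          f ((Finset.univ.filter (fun x => i + 1 ≤ (N x).card)).card) := by
    rw [conjugateMultiset, Multiset.map_map]
    have h0 : ((Multiset.range A.sup).map
          (f ∘ fun i => Multiset.card (A.filter (fun p => i + 1 ≤ p)))).sum
        = ∑ i ∈ Finset.range A.sup, f (Multiset.card (A.filter (fun p => i + 1 ≤ p))) := rfl
    rw [h0]
    refine Finset.sum_congr rfl (fun i _ => ?_)
    congr 1
    rw [← Multiset.countP_eq_card_filter, hA, Multiset.countP_map, ← Finset.filter_val,
      ← Finset.card_def]
  have hMoff : ∀ y : Y, f ((M y).card) =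
      ((Finset.univ.offDiag).filter (fun p : X × X => p.1 ∈ M y ∧ p.2 ∈ M y)).card := by
    intro y
    have h1 : (M y).offDiag
        = (Finset.univ.offDiag).filter (fun p : X × X => p.1 ∈ M y ∧ p.2 ∈ M y) := by
      ext ⟨a, b⟩
      simp only [Finset.mem_offDiag, Finset.mem_filter, Finset.mem_univ, true_and]
      tauto
    rw [← h1, Finset.offDiag_card]
  have hleft : ∑ y : Y, f ((M y).card)
      = ∑ p ∈ Finset.univ.offDiag, ((N p.1 ∩ N p.2)).card := by
    calc ∑ y : Y, f ((M y).card)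
        = ∑ y : Y, ∑ p ∈ Finset.univ.offDiag,
            (if p.1 ∈ M y ∧ p.2 ∈ M y then 1 else 0) := by
          refine Finset.sum_congr rfl (fun y _ => ?_)
          rw [hMoff y, Finset.card_filter]
      _ = ∑ p ∈ Finset.univ.offDiag, ∑ y : Y,
            (if p.1 ∈ M y ∧ p.2 ∈ M y then 1 else 0) := Finset.sum_comm
      _ = ∑ p ∈ Finset.univ.offDiag, ((N p.1 ∩ N p.2)).card := by
          refine Finset.sum_congr rfl (fun p _ => ?_)
          rw [← Finset.card_filter]
          congr 1
          ext y
          simp [hMN]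
  have hsupA : ∀ z : X, (N z).card ≤ A.sup := fun z => Multiset.le_sup (by
    rw [hA]; exact Multiset.mem_map.2 ⟨z, Finset.mem_val.mpr (Finset.mem_univ _), rfl⟩)
  have hright : ∑ i ∈ Finset.range A.sup,
        f ((Finset.univ.filter (fun x => i + 1 ≤ (N x).card)).card)
      = ∑ p ∈ Finset.univ.offDiag, min (N p.1).card (N p.2).card := by
    calc ∑ i ∈ Finset.range A.sup,
          f ((Finset.univ.filter (fun x => i + 1 ≤ (N x).card)).card)
        = ∑ i ∈ Finset.range A.sup, ∑ p ∈ Finset.univ.offDiag,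
            (if i + 1 ≤ (N p.1).card ∧ i + 1 ≤ (N p.2).card then 1 else 0) := by
          refine Finset.sum_congr rfl (fun i _ => ?_)
          have h1 : (Finset.univ.filter (fun x => i + 1 ≤ (N x).card)).offDiag
              = (Finset.univ.offDiag).filter
                  (fun p : X × X => i + 1 ≤ (N p.1).card ∧ i + 1 ≤ (N p.2).card) := by
            ext ⟨a, b⟩
            simp only [Finset.mem_offDiag, Finset.mem_filter, Finset.mem_univ, true_and]
            tauto
          rw [show f ((Finset.univ.filter (fun x => i + 1 ≤ (N x).card)).card)
              = ((Finset.univ.filter (fun x => i + 1 ≤ (N x).card)).offDiag).card from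
            (Finset.offDiag_card _).symm, h1, Finset.card_filter]
      _ = ∑ p ∈ Finset.univ.offDiag, ∑ i ∈ Finset.range A.sup,
            (if i + 1 ≤ (N p.1).card ∧ i + 1 ≤ (N p.2).card then 1 else 0) := Finset.sum_comm
      _ = ∑ p ∈ Finset.univ.offDiag, min (N p.1).card (N p.2).card := by
          refine Finset.sum_congr rfl (fun p _ => ?_)
          rw [← Finset.card_filter]
          have h2 : (Finset.range A.sup).filter
              (fun i => i + 1 ≤ (N p.1).card ∧ i + 1 ≤ (N p.2).card)
              = Finset.range (min (N p.1).card (N p.2).card) := by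
            have := hsupA p.1
            have := hsupA p.2
            ext i
            simp only [Finset.mem_filter, Finset.mem_range]
            omega
          rw [h2, Finset.card_range]
  have hsums : ∑ p ∈ Finset.univ.offDiag, ((N p.1 ∩ N p.2)).card
      = ∑ p ∈ Finset.univ.offDiag, min (N p.1).card (N p.2).card := by
    rw [← hleft, ← hright, ← hBsum, ← hCsum, ← hL, hsum]
  have hkey := (Finset.sum_eq_sum_iff_of_le (fun p _ =>
      le_min (Finset.card_le_card Finset.inter_subset_left)
        (Finset.card_le_card Finset.inter_subset_right))).1 hsums
  have hp : ((x, x') : X × X) ∈ Finset.univ.offDiag := by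
    simp [Finset.mem_offDiag, hne]
  have h := hkey _ hp
  simp only at h
  rcases le_total (N x).card (N x').card with h1 | h1
  · left
    have h2 : N x ∩ N x' = N x :=
      Finset.eq_of_subset_of_card_le Finset.inter_subset_left (by omega)
    rw [← h2]; exact Finset.inter_subset_right
  · right
    have h2 : N x ∩ N x' = N x' :=
      Finset.eq_of_subset_of_card_le Finset.inter_subset_right (by omega)
    rw [← h2]; exact Finset.inter_subset_left

end Main

theorem stmt12 {X Y : Type*} [Fintype X] [Fintype Y] (G : SimpleGraph (X ⊕ Y))
    (hbip : ∀ u v : X ⊕ Y, G.Adj u v →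
      (∃ x y, u = Sum.inl x ∧ v = Sum.inr y) ∨ (∃ x y, u = Sum.inr y ∧ v = Sum.inl x)) :
    (((Finset.univ.val.map (fun y : Y => sdeg G (Sum.inr y))).filter (fun d => 0 < d)) =
        conjugateMultiset (Finset.univ.val.map (fun x : X => sdeg G (Sum.inl x)))) ↔
      (∀ x x' : X, G.neighborSet (Sum.inl x) ⊆ G.neighborSet (Sum.inl x') ∨
        G.neighborSet (Sum.inl x') ⊆ G.neighborSet (Sum.inl x)) := by
  classical
  set N : X → Finset Y := fun x => Finset.univ.filter (fun y => G.Adj (Sum.inl x) (Sum.inr y))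
    with hN
  set M : Y → Finset X := fun y => Finset.univ.filter (fun x => G.Adj (Sum.inl x) (Sum.inr y))
    with hM
  have hMN : ∀ x y, x ∈ M y ↔ y ∈ N x := by intro x y; simp [hN, hM]
  have himg : ∀ x, G.neighborSet (Sum.inl x) = Sum.inr '' (↑(N x) : Set Y) := by
    intro x
    ext v
    constructor
    · intro hv
      rcases hbip _ _ hv with ⟨x1, y1, h1, h2⟩ | ⟨x1, y1, h1, h2⟩
      · subst h2
        refine ⟨y1, ?_, rfl⟩
        simp only [hN, Finset.coe_filter, Set.mem_setOf_eq, Finset.mem_univ, true_and]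
        exact hv
      · exact absurd h1 (by simp)
    · rintro ⟨y, hy, rfl⟩
      simp only [hN, Finset.coe_filter, Set.mem_setOf_eq, Finset.mem_univ, true_and] at hy
      exact hy
  have himgY : ∀ y, G.neighborSet (Sum.inr y) = Sum.inl '' (↑(M y) : Set X) := by
    intro y
    ext v
    constructor
    · intro hv
      rcases hbip _ _ hv with ⟨x1, y1, h1, h2⟩ | ⟨x1, y1, h1, h2⟩
      · exact absurd h1 (by simp)
      · subst h2
        refine ⟨x1, ?_, rfl⟩
        simp only [hM, Finset.coe_filter, Set.mem_setOf_eq, Finset.mem_univ, true_and]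
        exact hv.symm
    · rintro ⟨x, hx, rfl⟩
      simp only [hM, Finset.coe_filter, Set.mem_setOf_eq, Finset.mem_univ, true_and] at hx
      exact hx.symm
  have hdegX : ∀ x, sdeg G (Sum.inl x) = (N x).card := by
    intro x
    rw [sdeg, himg, Set.ncard_image_of_injective _ Sum.inr_injective, Set.ncard_coe_finset]
  have hdegY : ∀ y, sdeg G (Sum.inr y) = (M y).card := by
    intro y
    rw [sdeg, himgY, Set.ncard_image_of_injective _ Sum.inl_injective, Set.ncard_coe_finset]
  have hNsub : ∀ x x',
      (G.neighborSet (Sum.inl x) ⊆ G.neighborSet (Sum.inl x')) ↔ N x ⊆ N x' := by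
    intro x x'
    rw [himg, himg, Set.image_subset_image_iff Sum.inr_injective, ← Finset.coe_subset]
  have hmapX : Finset.univ.val.map (fun x : X => sdeg G (Sum.inl x))
      = Finset.univ.val.map (fun x : X => (N x).card) :=
    Multiset.map_congr rfl (fun x _ => hdegX x)
  have hmapY : Finset.univ.val.map (fun y : Y => sdeg G (Sum.inr y))
      = Finset.univ.val.map (fun y : Y => (M y).card) :=
    Multiset.map_congr rfl (fun y _ => hdegY y)
  rw [hmapX, hmapY]
  constructor
  · intro h x x'
    rw [hNsub, hNsub]
    exact ferrers_fwd N M hMN h x x'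
  · intro h
    exact ferrers_back N M hMN (fun x x' => by rw [← hNsub, ← hNsub]; exact h x x')
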